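/- If an element c ∈ kˣ lies in N_{K'/K}(K'ˣ), then c lies in N_{k'/k}(k'ˣ); equivalently, the homomorphism kˣ/N_{k'/k}(k'ˣ) → Kˣ/N_{K'/K}(K'ˣ) induced by the inclusion k ⊆ K is injective. -/

import Mathlib

open IntermediateField

theorem stmt_3 (p : ℕ) [Fact p.Prime]
    (k : Type) [Field k] [Algebra ℚ_[p] k] [FiniteDimensional ℚ_[p] k]
    (K' : Type) [Field K'] [Algebra k K'] [FiniteDimensional k K'] [IsGalois k K']
    (n : ℕ) (hodd : Odd n)
    (α β : K' ≃ₐ[k] K')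
    (hcomm : α * β = β * α)
    (hordα : orderOf α = 2) (hordβ : orderOf β = n)
    (hcard : Nat.card (K' ≃ₐ[k] K') = 2 * n)
    (hgen : ∀ g : K' ≃ₐ[k] K', g ∈ Subgroup.closure ({α, β} : Set (K' ≃ₐ[k] K')))
    (K : IntermediateField k K') (hK : K = fixedField (Subgroup.zpowers β))
    (k' : IntermediateField k K') (hk' : k' = fixedField (Subgroup.zpowers α))
    (c : k) (hc : c ≠ 0)
    (h : ∃ y : K', Algebra.norm (↥K) y = algebraMap k (↥K) c) :
    ∃ z : k', Algebra.norm k z = c := by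
  classical
  obtain ⟨y, hy⟩ := h
  have hsep : Algebra.IsSeparable k K' := IsGalois.to_isSeparable
  have hn0 : n ≠ 0 := by rintro rfl; exact (Nat.not_odd_iff_even.mpr Even.zero) hodd
  -- degrees
  have htot : Module.finrank k K' = 2 * n := by
    rw [← IsGalois.card_aut_eq_finrank, hcard]
  have hKK' : Module.finrank (↥K) K' = n := by
    rw [hK, IntermediateField.finrank_fixedField_eq_card,
      Nat.card_zpowers, hordβ]
  have hk'K' : Module.finrank (↥k') K' = 2 := by
    rw [hk', IntermediateField.finrank_fixedField_eq_card,
      Nat.card_zpowers, hordα]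
  have hkK : Module.finrank k (↥K) = 2 := by
    have := Module.finrank_mul_finrank k (↥K) K'
    rw [hKK', htot] at this
    exact Nat.eq_of_mul_eq_mul_right (Nat.pos_of_ne_zero hn0) this
  have hkk' : Module.finrank k (↥k') = n := by
    have := Module.finrank_mul_finrank k (↥k') K'
    rw [hk'K', htot] at this
    omega
  -- norm computations
  have h2 : Algebra.norm k y = c ^ 2 := by
    rw [← Algebra.norm_norm (R := k) (S := ↥K) (a := y), hy, Algebra.norm_algebraMap, hkK]
  set w : ↥k' := Algebra.norm (↥k') y with hw
  have h3 : Algebra.norm k w = c ^ 2 := by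
    rw [hw, Algebra.norm_norm (R := k) (S := ↥k') (a := y), h2]
  have hcpow : c ^ 2 ≠ 0 := pow_ne_zero 2 hc
  have hw0 : w ≠ 0 := by
    intro h0
    rw [h0, Algebra.norm_zero] at h3
    exact hcpow h3.symm
  have hac0 : algebraMap k (↥k') c ≠ 0 := by
    simpa using (map_ne_zero (algebraMap k (↥k'))).mpr hc
  have h4 : Algebra.norm k (algebraMap k (↥k') c) = c ^ n := by
    rw [Algebra.norm_algebraMap, hkk']
  -- work in units
  obtain ⟨m, hm⟩ := hodd
  refine ⟨(Units.mk0 w hw0 ^ (-(m : ℤ)) * Units.mk0 (algebraMap k (↥k') c) hac0 : (↥k')ˣ),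
    ?_⟩
  have key : (Units.map (Algebra.norm k : (↥k') →* k))
      (Units.mk0 w hw0 ^ (-(m : ℤ)) * Units.mk0 (algebraMap k (↥k') c) hac0)
      = Units.mk0 c hc := by
    have hW : (Units.map (Algebra.norm k : (↥k') →* k)) (Units.mk0 w hw0)
        = Units.mk0 c hc ^ 2 := by
      ext; simp [h3]
    have hA : (Units.map (Algebra.norm k : (↥k') →* k))
        (Units.mk0 (algebraMap k (↥k') c) hac0) = Units.mk0 c hc ^ n := by
      ext; simp [h4]
    rw [map_mul, map_zpow, hW, hA]
    rw [hm, pow_add, pow_one, pow_mul, zpow_neg, zpow_natCast, inv_mul_cancel_left]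
  have := congrArg Units.val key
  simpa only [Units.coe_map, MonoidHom.coe_coe, Units.val_mk0] using this
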